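/- For integers n > 2k - t with k > 2t + 1, t ≥ 0 and q ≥ 3: θ_k + Σ_{j=0}^{k-t-2} [k-t+1 choose j+1]_q · q^{(k-t-j)(k-t-j-1)} · [n-k-1 choose k-t-j-1]_q > [n-t-2 choose k-t-2]_q · (1 + θ_{t+1}·q^{k-t-1}·(q^{n-k}-1)/(q^{k-t-1}-1)). -/

import Mathlib

/-- Gaussian binomial coefficient `[n choose k]_q` as a real number,
with the convention that it is `0` for `k < 0` (and for `k > n`). -/
noncomputable def gbin (q n : ℕ) (k : ℤ) : ℝ :=
  if 0 ≤ k then ∏ i ∈ Finset.range k.toNat, ((q:ℝ)^(n-i) - 1)/((q:ℝ)^(i+1) - 1) else 0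

/-- `θ_m = (q^{m+1}-1)/(q-1)`, the number of points of `PG(m,q)`. -/
noncomputable def theta (q m : ℕ) : ℝ := ((q:ℝ)^(m+1) - 1)/((q:ℝ) - 1)

lemma gbin_nat (q N K : ℕ) :
    gbin q N (K:ℤ) = ∏ i ∈ Finset.range K, ((q:ℝ)^(N-i) - 1)/((q:ℝ)^(i+1) - 1) := by
  simp [gbin]

lemma pow_sub_one_pos {q : ℕ} (hq : 2 ≤ q) {e : ℕ} (he : 1 ≤ e) : (0:ℝ) < (q:ℝ)^e - 1 := by
  have h2 : (2:ℝ) ≤ (q:ℝ) := by exact_mod_cast hq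
  have : (1:ℝ) < (q:ℝ)^e := by
    apply one_lt_pow₀ (by linarith) (by omega)
  linarith

lemma gbin_nonneg {q : ℕ} (hq : 2 ≤ q) (N : ℕ) (z : ℤ) : 0 ≤ gbin q N z := by
  unfold gbin
  split
  · apply Finset.prod_nonneg
    intro i _
    apply div_nonneg
    · have h2 : (1:ℝ) ≤ (q:ℝ) := by exact_mod_cast (by omega : 1 ≤ q)
      linarith [one_le_pow₀ h2 (n := N-i)]
    · linarith [pow_sub_one_pos hq (by omega : 1 ≤ i+1)]
  · exact le_refl _

lemma gbin_eq_prod {q : ℕ} (N K : ℕ) :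
    gbin q N (K:ℤ) = ∏ i ∈ Finset.range K, ((q:ℝ)^(N-i) - 1)/((q:ℝ)^(K-i) - 1) := by
  rw [gbin_nat]
  rw [Finset.prod_div_distrib, Finset.prod_div_distrib]
  congr 1
  rw [← Finset.prod_range_reflect]
  apply Finset.prod_congr rfl
  intro i hi
  simp only [Finset.mem_range] at hi
  congr 2
  omega

lemma gbin_lower {q : ℕ} (hq : 2 ≤ q) {N K : ℕ} (h : K ≤ N) :
    (q:ℝ)^(K*(N-K)) ≤ gbin q N (K:ℤ) := by
  rw [gbin_eq_prod]
  calc (q:ℝ)^(K*(N-K)) = ∏ _i ∈ Finset.range K, (q:ℝ)^(N-K) := by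
        rw [Finset.prod_const, ← pow_mul, Finset.card_range, mul_comm]
    _ ≤ _ := by
        apply Finset.prod_le_prod
        · intro i _; positivity
        · intro i hi
          simp only [Finset.mem_range] at hi
          have hd : (0:ℝ) < (q:ℝ)^(K-i) - 1 := pow_sub_one_pos hq (by omega)
          rw [le_div_iff₀ hd]
          have he : (q:ℝ)^(N-K) * (q:ℝ)^(K-i) = (q:ℝ)^(N-i) := by
            rw [← pow_add]; congr 1; omega
          have h1 : (1:ℝ) ≤ (q:ℝ)^(N-K) := one_le_pow₀ (by exact_mod_cast (by omega : 1 ≤ q))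
          nlinarith [he]

lemma gbin_pos {q : ℕ} (hq : 2 ≤ q) {N K : ℕ} (h : K ≤ N) : 0 < gbin q N (K:ℤ) :=
  lt_of_lt_of_le (by positivity) (gbin_lower hq h)

lemma prod_one_sub_ge {q : ℕ} (hq : 3 ≤ q) (K : ℕ) :
    (1 + ((q:ℝ)^K)⁻¹)/2 ≤ ∏ i ∈ Finset.range K, (1 - ((q:ℝ)^(i+1))⁻¹) := by
  have hq3 : (3:ℝ) ≤ (q:ℝ) := by exact_mod_cast hq
  induction K with
  | zero => norm_num
  | succ K ih =>
    rw [Finset.prod_range_succ]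
    have hy : (0:ℝ) < (q:ℝ)^(K+1) := by positivity
    have hy' : (0:ℝ) < (q:ℝ)^K := by positivity
    have hyl : ((q:ℝ)^(K+1))⁻¹ ≤ 1/3 := by
      rw [inv_le_comm₀ (by positivity) (by norm_num)]
      calc (1/3 : ℝ)⁻¹ = 3 := by norm_num
        _ ≤ (q:ℝ)^(K+1) := le_trans hq3 (le_self_pow₀ (by linarith) (by omega))
    have hrel : (q:ℝ)^(K+1) = (q:ℝ)^K * q := pow_succ _ _
    have key : (1 + ((q:ℝ)^(K+1))⁻¹)/2 ≤ (1 + ((q:ℝ)^K)⁻¹)/2 * (1 - ((q:ℝ)^(K+1))⁻¹) := by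
      have hK : ((q:ℝ)^K)⁻¹ = (q:ℝ) * ((q:ℝ)^(K+1))⁻¹ := by
        field_simp [hrel]
        exact hrel
      rw [hK]
      set y := ((q:ℝ)^(K+1))⁻¹ with hy_def
      have hy0 : 0 < y := by positivity
      -- (1+qy)(1-y)/2 ≥ (1+y)/2  ⟺  qy - 2y - qy² ≥ 0 ⟸ q ≥ 3, qy ≤ 1
      have hqy : (q:ℝ) * y ≤ 1 := by
        rw [← hK]
        exact inv_le_one_of_one_le₀ (one_le_pow₀ (by linarith))
      nlinarith
    calc (1 + ((q:ℝ)^(K+1))⁻¹)/2 ≤ (1 + ((q:ℝ)^K)⁻¹)/2 * (1 - ((q:ℝ)^(K+1))⁻¹) := key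
      _ ≤ (∏ i ∈ Finset.range K, (1 - ((q:ℝ)^(i+1))⁻¹)) * (1 - ((q:ℝ)^(K+1))⁻¹) := by
          apply mul_le_mul_of_nonneg_right ih (by linarith)

lemma gbin_upper {q : ℕ} (hq : 3 ≤ q) {N K : ℕ} (h : K ≤ N) :
    gbin q N (K:ℤ) ≤ 2 * (q:ℝ)^(K*(N-K)) := by
  have hq1 : (1:ℝ) ≤ (q:ℝ) := by exact_mod_cast (by omega : 1 ≤ q)
  rw [gbin_eq_prod]
  have step : ∀ i ∈ Finset.range K,
      ((q:ℝ)^(N-i) - 1)/((q:ℝ)^(K-i) - 1) ≤ (q:ℝ)^(N-K) / (1 - ((q:ℝ)^(K-i))⁻¹) := by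
    intro i hi
    simp only [Finset.mem_range] at hi
    have hd : (0:ℝ) < (q:ℝ)^(K-i) - 1 := pow_sub_one_pos (by omega) (by omega)
    have hp : (0:ℝ) < (q:ℝ)^(K-i) := by positivity
    have he : (q:ℝ)^(N-K) * (q:ℝ)^(K-i) = (q:ℝ)^(N-i) := by
      rw [← pow_add]; congr 1; omega
    have hrw : (q:ℝ)^(N-K) / (1 - ((q:ℝ)^(K-i))⁻¹) = (q:ℝ)^(N-i) / ((q:ℝ)^(K-i) - 1) := by
      rw [← he]; field_simp
    rw [hrw]
    gcongr
    · linarith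
  calc (∏ i ∈ Finset.range K, ((q:ℝ)^(N-i) - 1)/((q:ℝ)^(K-i) - 1))
      ≤ ∏ i ∈ Finset.range K, (q:ℝ)^(N-K) / (1 - ((q:ℝ)^(K-i))⁻¹) := by
        apply Finset.prod_le_prod ?_ step
        intro i hi
        simp only [Finset.mem_range] at hi
        have hd : (0:ℝ) < (q:ℝ)^(K-i) - 1 := pow_sub_one_pos (by omega) (by omega)
        have hn : (0:ℝ) ≤ (q:ℝ)^(N-i) - 1 := by
          have : (1:ℝ) ≤ (q:ℝ)^(N-i) := one_le_pow₀ hq1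
          linarith
        exact div_nonneg hn hd.le
    _ = (q:ℝ)^(K*(N-K)) / ∏ i ∈ Finset.range K, (1 - ((q:ℝ)^(K-i))⁻¹) := by
        rw [Finset.prod_div_distrib, Finset.prod_const, Finset.card_range, ← pow_mul,
          mul_comm K]
    _ ≤ 2 * (q:ℝ)^(K*(N-K)) := by
        have hre : (∏ i ∈ Finset.range K, (1 - ((q:ℝ)^(K-i))⁻¹))
            = ∏ i ∈ Finset.range K, (1 - ((q:ℝ)^(i+1))⁻¹) := by
          rw [← Finset.prod_range_reflect]
          apply Finset.prod_congr rfl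
          intro i hi
          simp only [Finset.mem_range] at hi
          congr 3
          omega
        rw [hre]
        have h2 := prod_one_sub_ge hq K
        have hx : (0:ℝ) < ((q:ℝ)^K)⁻¹ := by positivity
        have hhalf : (1:ℝ)/2 ≤ ∏ i ∈ Finset.range K, (1 - ((q:ℝ)^(i+1))⁻¹) := by
          linarith
        rw [div_le_iff₀ (by linarith)]
        have hp : (0:ℝ) ≤ (q:ℝ)^(K*(N-K)) := by positivity
        nlinarith

lemma gbin_one (q N : ℕ) : gbin q N ((1:ℕ):ℤ) = ((q:ℝ)^N - 1)/((q:ℝ) - 1) := by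
  rw [gbin_nat]
  simp

lemma theta_pos {q : ℕ} (hq : 2 ≤ q) (m : ℕ) : 0 < theta q m := by
  have h2 : (2:ℝ) ≤ (q:ℝ) := by exact_mod_cast hq
  have h1 := pow_sub_one_pos hq (by omega : 1 ≤ m+1)
  unfold theta
  apply div_pos h1 (by linarith)

lemma theta_upper {q : ℕ} (hq : 3 ≤ q) (m : ℕ) : theta q m ≤ (3/2) * (q:ℝ)^m := by
  have h3 : (3:ℝ) ≤ (q:ℝ) := by exact_mod_cast hq
  unfold theta
  rw [div_le_iff₀ (by linarith)]
  have hp : (0:ℝ) ≤ (q:ℝ)^m := by positivity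
  have : (q:ℝ)^(m+1) = (q:ℝ)^m * q := pow_succ _ _
  nlinarith

lemma theta_lower {q : ℕ} (hq : 3 ≤ q) (b : ℕ) :
    ((q:ℝ)^2 + q + 1) * (q:ℝ)^b ≤ theta q (b+2) := by
  have h3 : (3:ℝ) ≤ (q:ℝ) := by exact_mod_cast hq
  unfold theta
  rw [le_div_iff₀ (by linarith)]
  have h1 : (1:ℝ) ≤ (q:ℝ)^b := one_le_pow₀ (by linarith)
  have he : (q:ℝ)^(b+2+1) = (q:ℝ)^b * (q:ℝ)^3 := by rw [← pow_add]
  nlinarith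

lemma key_bound {q : ℕ} (hq : 3 ≤ q) (T M : ℕ) (hM : 1 ≤ M) :
    gbin q (T + M) ((T:ℕ):ℤ) * ((q:ℝ)^(T+1) * (((q:ℝ)^M - 1)/((q:ℝ)^(T+1) - 1)))
      ≤ (9/4) * (q:ℝ)^(T*M + M) := by
  have hq3 : (3:ℝ) ≤ (q:ℝ) := by exact_mod_cast hq
  have hq1 : (1:ℝ) ≤ (q:ℝ) := by linarith
  have hxM : (1:ℝ) ≤ (q:ℝ)^M := one_le_pow₀ hq1
  cases T with
  | zero =>
    have hG : gbin q (0 + M) ((0:ℕ):ℤ) = 1 := by rw [gbin_nat]; simp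
    rw [hG, one_mul]
    have hD : (0:ℝ) < (q:ℝ) - 1 := by linarith
    have hpow : (q:ℝ)^(0+1) = (q:ℝ) := by norm_num
    rw [hpow]
    rw [mul_div_assoc']
    rw [div_le_iff₀ hD]
    simp only [Nat.zero_mul, Nat.zero_add]
    nlinarith [mul_nonneg (sub_nonneg.mpr hxM) (sub_nonneg.mpr hq3)]
  | succ S =>
    have hT1 : S + 1 + 1 = S + 2 := rfl
    have h9 : (9:ℝ) ≤ (q:ℝ)^(S+1+1) := by
      calc (9:ℝ) = 3^2 := by norm_num
        _ ≤ (q:ℝ)^2 := by apply pow_le_pow_left₀ (by norm_num) hq3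
        _ ≤ (q:ℝ)^(S+1+1) := pow_le_pow_right₀ hq1 (by omega)
    have hD : (0:ℝ) < (q:ℝ)^(S+1+1) - 1 := pow_sub_one_pos (by omega) (by omega)
    have hG : gbin q (S+1 + M) (((S+1:ℕ)):ℤ) ≤ 2 * (q:ℝ)^((S+1)*M) := by
      have := gbin_upper (q:=q) hq (N := S+1+M) (K := S+1) (by omega)
      rwa [show (S+1)*((S+1+M)-(S+1)) = (S+1)*M from by rw [show S+1+M-(S+1) = M from by omega]] at this
    have hGnn : 0 ≤ gbin q (S+1+M) (((S+1:ℕ)):ℤ) := gbin_nonneg (by omega) _ _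
    have hX : (q:ℝ)^(S+1+1) * (((q:ℝ)^M - 1)/((q:ℝ)^(S+1+1) - 1)) ≤ (9/8) * (q:ℝ)^M := by
      rw [mul_div_assoc', div_le_iff₀ hD]
      nlinarith [mul_nonneg (sub_nonneg.mpr h9) (by positivity : (0:ℝ) ≤ (q:ℝ)^M)]
    have hXnn : 0 ≤ (q:ℝ)^(S+1+1) * (((q:ℝ)^M - 1)/((q:ℝ)^(S+1+1) - 1)) := by
      apply mul_nonneg (by positivity)
      exact div_nonneg (by linarith) hD.le
    calc gbin q (S+1+M) (((S+1:ℕ)):ℤ) * ((q:ℝ)^(S+1+1) * (((q:ℝ)^M - 1)/((q:ℝ)^(S+1+1) - 1)))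
        ≤ (2 * (q:ℝ)^((S+1)*M)) * ((9/8) * (q:ℝ)^M) := by
          apply mul_le_mul hG hX hXnn (by positivity)
      _ = (9/4) * (q:ℝ)^((S+1)*M + M) := by rw [pow_add]; ring


set_option maxHeartbeats 2000000 in
theorem stmt_9 (q n k t : ℕ) (hn : 2*k < n + t) (hk : 2*t + 1 < k) (hq : 3 ≤ q) :
    gbin q (n-t-2) ((k:ℤ)-t-2) *
        (1 + theta q (t+1) * (q:ℝ)^(k-t-1) * (((q:ℝ)^(n-k) - 1)/((q:ℝ)^(k-t-1) - 1)))
    < theta q k + ∑ j ∈ Finset.range (k-t-1),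
        gbin q (k-t+1) ((j:ℤ)+1) * (q:ℝ)^((k-t-j)*(k-t-j-1)) *
          gbin q (n-k-1) ((k:ℤ)-t-j-1) := by
  obtain ⟨d, rfl⟩ : ∃ d, k = 2*t+2+d := ⟨k-(2*t+2), by omega⟩
  obtain ⟨c, rfl⟩ : ∃ c, n = (2*t+2+d) + (t+d+3+c) := ⟨n - (3*t+2*d+5), by omega⟩
  have hq3 : (3:ℝ) ≤ (q:ℝ) := by exact_mod_cast hq
  have hq0 : (0:ℝ) < (q:ℝ) := by linarith
  have hq1 : (1:ℝ) ≤ (q:ℝ) := by linarith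
  -- normalize natural subtractions
  have e2 : ((2*t+2+d:ℕ):ℤ) - t - 2 = ((t+d:ℕ):ℤ) := by push_cast; ring
  rw [e2]
  have e1 : (2*t+2+d)+(t+d+3+c)-t-2 = (t+d) + (t+d+3+c) := by omega
  have e3 : 2*t+2+d-t-1 = t+d+1 := by omega
  have e4 : (2*t+2+d)+(t+d+3+c)-(2*t+2+d) = t+d+3+c := by omega
  have e5 : 2*t+2+d-t+1 = t+d+3 := by omega
  have e6 : (2*t+2+d)+(t+d+3+c)-(2*t+2+d)-1 = t+d+2+c := by omega
  simp only [e1, e3, e4, e5, e6]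
  have e7 : t+d+3+c-1 = t+d+2+c := by omega
  simp only [e7]
  have hq2 : 2 ≤ q := by omega
  -- lower bound for the right side: the j = 0 term
  have hnn : ∀ j ∈ Finset.range (t+d+1),
      0 ≤ gbin q (t+d+3) ((j:ℤ)+1) * (q:ℝ)^((2*t+2+d-t-j)*(2*t+2+d-t-j-1)) *
        gbin q (t+d+2+c) (((2*t+2+d:ℕ):ℤ)-t-j-1) := by
    intro j _
    have h1 := gbin_nonneg hq2 (t+d+3) ((j:ℤ)+1)
    have h2 := gbin_nonneg hq2 (t+d+2+c) (((2*t+2+d:ℕ):ℤ)-t-j-1)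
    have h3 : (0:ℝ) ≤ (q:ℝ)^((2*t+2+d-t-j)*(2*t+2+d-t-j-1)) := by positivity
    exact mul_nonneg (mul_nonneg h1 h3) h2
  have hsum := Finset.single_le_sum hnn (by simp : (0:ℕ) ∈ Finset.range (t+d+1))
  simp only [Nat.cast_zero, Nat.sub_zero, sub_zero] at hsum
  -- simplify the j = 0 term in hsum
  have c1 : ((0:ℤ)+1) = ((1:ℕ):ℤ) := by norm_num
  have c2 : 2*t+2+d-t = t+d+2 := by omega
  have c3 : t+d+2-1 = t+d+1 := by omega
  have c4 : ((2*t+2+d:ℕ):ℤ)-(t:ℤ)-1 = ((t+d+1:ℕ):ℤ) := by push_cast; ring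
  conv at hsum =>
    lhs
    rw [c1, c2, c3, c4]
  -- lower bounds for the three factors of the j=0 term
  have g1 : ((q:ℝ)^2+(q:ℝ)+1)*(q:ℝ)^(t+d) ≤ gbin q (t+d+3) ((1:ℕ):ℤ) := by
    rw [gbin_one]
    rw [le_div_iff₀ (by linarith)]
    have h1 : (1:ℝ) ≤ (q:ℝ)^(t+d) := one_le_pow₀ hq1
    have he : (q:ℝ)^(t+d+3) = (q:ℝ)^(t+d) * (q:ℝ)^3 := by rw [← pow_add]
    nlinarith
  have g2 : (q:ℝ)^((t+d+1)*(c+1)) ≤ gbin q (t+d+2+c) ((t+d+1:ℕ):ℤ) := by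
    have := gbin_lower (q:=q) hq2 (N := t+d+2+c) (K := t+d+1) (by omega)
    rwa [show (t+d+1)*((t+d+2+c)-(t+d+1)) = (t+d+1)*(c+1) from by
      rw [show t+d+2+c-(t+d+1) = c+1 from by omega]] at this
  have g1nn : (0:ℝ) ≤ ((q:ℝ)^2+(q:ℝ)+1)*(q:ℝ)^(t+d) := by positivity
  have hterm0 : ((q:ℝ)^2+(q:ℝ)+1) * (q:ℝ)^((t+d) + (t+d+2)*(t+d+1) + (t+d+1)*(c+1))
      ≤ gbin q (t+d+3) ((1:ℕ):ℤ) * (q:ℝ)^((t+d+2)*(t+d+1)) * gbin q (t+d+2+c) ((t+d+1:ℕ):ℤ) := by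
    have step1 : ((q:ℝ)^2+(q:ℝ)+1)*(q:ℝ)^(t+d) * (q:ℝ)^((t+d+2)*(t+d+1))
        ≤ gbin q (t+d+3) ((1:ℕ):ℤ) * (q:ℝ)^((t+d+2)*(t+d+1)) :=
      mul_le_mul_of_nonneg_right g1 (by positivity)
    have step2 := mul_le_mul step1 g2 (by positivity) (by
      have := gbin_nonneg hq2 (t+d+3) ((1:ℕ):ℤ)
      positivity)
    calc ((q:ℝ)^2+(q:ℝ)+1) * (q:ℝ)^((t+d) + (t+d+2)*(t+d+1) + (t+d+1)*(c+1))
        = ((q:ℝ)^2+(q:ℝ)+1)*(q:ℝ)^(t+d) * (q:ℝ)^((t+d+2)*(t+d+1)) * (q:ℝ)^((t+d+1)*(c+1)) := by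
          rw [pow_add, pow_add]; ring
      _ ≤ _ := step2
  -- upper bound for the left side
  have hθ1 : theta q (t+1) ≤ (3/2)*(q:ℝ)^(t+1) := theta_upper hq (t+1)
  have hθ1nn : 0 ≤ theta q (t+1) := (theta_pos hq2 (t+1)).le
  have hkey := key_bound hq (t+d) (t+d+3+c) (by omega)
  have hGnn : 0 ≤ gbin q (t+d+(t+d+3+c)) ((t+d:ℕ):ℤ) := gbin_nonneg hq2 _ _
  have hG : gbin q (t+d+(t+d+3+c)) ((t+d:ℕ):ℤ) ≤ 2 * (q:ℝ)^((t+d)*(t+d+3+c)) := by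
    have := gbin_upper (q:=q) hq (N := t+d+(t+d+3+c)) (K := t+d) (by omega)
    rwa [show (t+d)*((t+d+(t+d+3+c))-(t+d)) = (t+d)*(t+d+3+c) from by
      rw [show t+d+(t+d+3+c)-(t+d) = t+d+3+c from by omega]] at this
  have hD : (0:ℝ) < (q:ℝ)^(t+d+1) - 1 := pow_sub_one_pos hq2 (by omega)
  have hXnn : 0 ≤ (q:ℝ)^(t+d+1) * (((q:ℝ)^(t+d+3+c) - 1)/((q:ℝ)^(t+d+1) - 1)) := by
    apply mul_nonneg (by positivity)
    exact div_nonneg (by linarith [one_le_pow₀ hq1 (n := t+d+3+c)]) hD.le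
  -- LHS ≤ (2/81 + 27/8) * q^((t+d)*(t+d+3+c) + (t+d+3+c) + t + 1)
  have hL : gbin q (t+d+(t+d+3+c)) ((t+d:ℕ):ℤ) *
      (1 + theta q (t+1) * (q:ℝ)^(t+d+1) * (((q:ℝ)^(t+d+3+c) - 1)/((q:ℝ)^(t+d+1) - 1)))
      ≤ (2/81 + 27/8) * (q:ℝ)^((t+d)*(t+d+3+c) + (t+d+3+c) + t + 1) := by
    have expand : gbin q (t+d+(t+d+3+c)) ((t+d:ℕ):ℤ) *
        (1 + theta q (t+1) * (q:ℝ)^(t+d+1) * (((q:ℝ)^(t+d+3+c) - 1)/((q:ℝ)^(t+d+1) - 1)))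
        = gbin q (t+d+(t+d+3+c)) ((t+d:ℕ):ℤ) +
          theta q (t+1) * (gbin q (t+d+(t+d+3+c)) ((t+d:ℕ):ℤ) *
            ((q:ℝ)^(t+d+1) * (((q:ℝ)^(t+d+3+c) - 1)/((q:ℝ)^(t+d+1) - 1)))) := by ring
    rw [expand]
    have hbig : (81:ℝ) ≤ (q:ℝ)^((t+d+3+c) + t + 1) := by
      calc (81:ℝ) = 3^4 := by norm_num
        _ ≤ (q:ℝ)^4 := pow_le_pow_left₀ (by norm_num) hq3 4
        _ ≤ (q:ℝ)^((t+d+3+c) + t + 1) := pow_le_pow_right₀ hq1 (by omega)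
    have h1 : gbin q (t+d+(t+d+3+c)) ((t+d:ℕ):ℤ)
        ≤ (2/81) * (q:ℝ)^((t+d)*(t+d+3+c) + (t+d+3+c) + t + 1) := by
      calc gbin q (t+d+(t+d+3+c)) ((t+d:ℕ):ℤ) ≤ 2 * (q:ℝ)^((t+d)*(t+d+3+c)) := hG
        _ = (2/81) * ((q:ℝ)^((t+d)*(t+d+3+c)) * 81) := by ring
        _ ≤ (2/81) * ((q:ℝ)^((t+d)*(t+d+3+c)) * (q:ℝ)^((t+d+3+c) + t + 1)) := by
            apply mul_le_mul_of_nonneg_left ?_ (by norm_num)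
            exact mul_le_mul_of_nonneg_left hbig (by positivity)
        _ = (2/81) * (q:ℝ)^((t+d)*(t+d+3+c) + (t+d+3+c) + t + 1) := by
            rw [← pow_add]; ring_nf
    have h2 : theta q (t+1) * (gbin q (t+d+(t+d+3+c)) ((t+d:ℕ):ℤ) *
        ((q:ℝ)^(t+d+1) * (((q:ℝ)^(t+d+3+c) - 1)/((q:ℝ)^(t+d+1) - 1))))
        ≤ (27/8) * (q:ℝ)^((t+d)*(t+d+3+c) + (t+d+3+c) + t + 1) := by
      have hGX : gbin q (t+d+(t+d+3+c)) ((t+d:ℕ):ℤ) *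
          ((q:ℝ)^(t+d+1) * (((q:ℝ)^(t+d+3+c) - 1)/((q:ℝ)^(t+d+1) - 1)))
          ≤ (9/4) * (q:ℝ)^((t+d)*(t+d+3+c) + (t+d+3+c)) := hkey
      have hGXnn : 0 ≤ gbin q (t+d+(t+d+3+c)) ((t+d:ℕ):ℤ) *
          ((q:ℝ)^(t+d+1) * (((q:ℝ)^(t+d+3+c) - 1)/((q:ℝ)^(t+d+1) - 1))) :=
        mul_nonneg hGnn hXnn
      calc theta q (t+1) * (gbin q (t+d+(t+d+3+c)) ((t+d:ℕ):ℤ) *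
            ((q:ℝ)^(t+d+1) * (((q:ℝ)^(t+d+3+c) - 1)/((q:ℝ)^(t+d+1) - 1))))
          ≤ ((3/2)*(q:ℝ)^(t+1)) * ((9/4) * (q:ℝ)^((t+d)*(t+d+3+c) + (t+d+3+c))) :=
            mul_le_mul hθ1 hGX hGXnn (by positivity)
        _ = (27/8) * (q:ℝ)^((t+d)*(t+d+3+c) + (t+d+3+c) + t + 1) := by
            rw [show (t+d)*(t+d+3+c) + (t+d+3+c) + t + 1
                = ((t+d)*(t+d+3+c) + (t+d+3+c)) + (t+1) from by omega, pow_add]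
            ring
    linarith
  -- final comparison
  have hfin : (2/81 + 27/8 : ℝ) * (q:ℝ)^((t+d)*(t+d+3+c) + (t+d+3+c) + t + 1)
      < ((q:ℝ)^2+(q:ℝ)+1) * (q:ℝ)^((t+d) + (t+d+2)*(t+d+1) + (t+d+1)*(c+1)) := by
    have eE : (t+d) + (t+d+2)*(t+d+1) + (t+d+1)*(c+1)
        = ((t+d)*(t+d+3+c) + (t+d+3+c) + t) + d := by ring
    have eL : (t+d)*(t+d+3+c) + (t+d+3+c) + t + 1
        = ((t+d)*(t+d+3+c) + (t+d+3+c) + t) + 1 := by omega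
    rw [eE, eL]
    set A := (t+d)*(t+d+3+c) + (t+d+3+c) + t with hA
    have epow1 : (q:ℝ)^(A+1) = (q:ℝ)^A * q := pow_succ _ _
    have epow2 : (q:ℝ)^(A+d) = (q:ℝ)^A * (q:ℝ)^d := pow_add _ _ _
    have hp : (0:ℝ) < (q:ℝ)^A := by positivity
    have hd1 : (1:ℝ) ≤ (q:ℝ)^d := one_le_pow₀ hq1
    have hnum : (2/81 + 27/8 : ℝ) * (q:ℝ) < ((q:ℝ)^2+(q:ℝ)+1) := by nlinarith
    have hpos2 : (0:ℝ) < (q:ℝ)^2+(q:ℝ)+1 := by positivity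
    have h1 := mul_lt_mul_of_pos_right hnum hp
    have h2 : ((q:ℝ)^2+(q:ℝ)+1) * (q:ℝ)^A ≤ ((q:ℝ)^2+(q:ℝ)+1) * (q:ℝ)^A * (q:ℝ)^d := by
      nlinarith [mul_nonneg (le_of_lt (mul_pos hpos2 hp)) (sub_nonneg.mpr hd1)]
    nlinarith [h1, h2, epow1, epow2]
  have hθk := theta_pos hq2 (2*t+2+d)
  calc gbin q (t+d+(t+d+3+c)) ((t+d:ℕ):ℤ) *
      (1 + theta q (t+1) * (q:ℝ)^(t+d+1) * (((q:ℝ)^(t+d+3+c) - 1)/((q:ℝ)^(t+d+1) - 1)))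
      ≤ (2/81 + 27/8) * (q:ℝ)^((t+d)*(t+d+3+c) + (t+d+3+c) + t + 1) := hL
    _ < ((q:ℝ)^2+(q:ℝ)+1) * (q:ℝ)^((t+d) + (t+d+2)*(t+d+1) + (t+d+1)*(c+1)) := hfin
    _ ≤ gbin q (t+d+3) ((1:ℕ):ℤ) * (q:ℝ)^((t+d+2)*(t+d+1)) * gbin q (t+d+2+c) ((t+d+1:ℕ):ℤ) := hterm0
    _ ≤ ∑ j ∈ Finset.range (t+d+1),
        gbin q (t+d+3) ((j:ℤ)+1) * (q:ℝ)^((2*t+2+d-t-j)*(2*t+2+d-t-j-1)) *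
          gbin q (t+d+2+c) (((2*t+2+d:ℕ):ℤ)-t-j-1) := hsum
    _ ≤ theta q (2*t+2+d) + _ := by linarith
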